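/- Let a₁, ..., aₙ be positive integers with gcd(a₁,...,aₙ) = 1, and let d divide gcd(a₁,...,a_{n-1}) with gcd(d, aₙ) = 1. Then the genus satisfies g(a₁,...,aₙ) = d·g(a₁/d, ..., a_{n-1}/d, aₙ) + (aₙ - 1)(d - 1)/2. -/

import Mathlib

private def NRep {n : ℕ} (a : Fin n → ℕ) (c m : ℕ) : Prop :=
  ∃ x : Fin n → ℕ, ∃ y : ℕ, m = (∑ i, a i * x i) + c * y

private lemma nrep_add {n : ℕ} {a : Fin n → ℕ} {c m₁ m₂ : ℕ}
    (h₁ : NRep a c m₁) (h₂ : NRep a c m₂) : NRep a c (m₁ + m₂) := by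
  obtain ⟨x₁, y₁, rfl⟩ := h₁
  obtain ⟨x₂, y₂, rfl⟩ := h₂
  refine ⟨fun i => x₁ i + x₂ i, y₁ + y₂, ?_⟩
  simp only [mul_add, Finset.sum_add_distrib]
  ring

private lemma nrep_mul {n : ℕ} {a : Fin n → ℕ} {c m : ℕ} (k : ℕ)
    (h : NRep a c m) : NRep a c (k * m) := by
  induction k with
  | zero => exact ⟨0, 0, by simp⟩
  | succ k ih =>
    have := nrep_add ih h
    simpa [add_mul, one_mul] using this

private lemma finset_gcd_bezout {ι : Type*} (s : Finset ι) (f : ι → ℕ) :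
    ∃ u : ι → ℤ, ((s.gcd f : ℕ) : ℤ) = ∑ i ∈ s, (f i : ℤ) * u i := by
  classical
  induction s using Finset.induction_on with
  | empty => exact ⟨0, by simp⟩
  | insert j s hnotmem ih =>
    obtain ⟨u, hu⟩ := ih
    rw [Finset.gcd_insert]
    set G : ℕ := s.gcd f with hG
    set A : ℤ := Nat.gcdA (f j) G with hA
    set B : ℤ := Nat.gcdB (f j) G with hB
    have hg : ((Nat.gcd (f j) G : ℕ) : ℤ) = (f j : ℤ) * A + (G : ℤ) * B :=
      Nat.gcd_eq_gcd_ab _ _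
    refine ⟨fun i => if i = j then A else u i * B, ?_⟩
    have hgg : gcd (f j) G = Nat.gcd (f j) G := rfl
    rw [Finset.sum_insert hnotmem, hgg, hg, hu]
    beta_reduce
    rw [if_pos rfl]
    have hrest : ∑ i ∈ s, (f i : ℤ) * (if i = j then A else u i * B)
        = (∑ i ∈ s, (f i : ℤ) * u i) * B := by
      rw [Finset.sum_mul]
      refine Finset.sum_congr rfl fun i hi => ?_
      rw [if_neg (by rintro rfl; exact hnotmem hi)]
      ring
    rw [hrest]

private lemma nrep_cofinite {n : ℕ} (a : Fin n → ℕ) (c : ℕ) (hc : 0 < c)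
    (hgcd : Nat.gcd (Finset.univ.gcd a) c = 1) :
    ∃ N, ∀ m, N ≤ m → NRep a c m := by
  obtain ⟨u, hu⟩ := finset_gcd_bezout (Finset.univ : Finset (Fin n)) a
  set G : ℕ := Finset.univ.gcd a with hGdef
  have hb : (1 : ℤ) = ((G : ℕ) : ℤ) * Nat.gcdA G c
      + (c : ℤ) * Nat.gcdB G c := by
    have := Nat.gcd_eq_gcd_ab G c
    rw [hGdef, hgcd] at this
    rw [hGdef]
    exact_mod_cast this
  set p := Nat.gcdA G c with hp
  set q := Nat.gcdB G c with hq
  set w : Fin n → ℤ := fun i => u i * p with hw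
  have hkey : (1 : ℤ) = (∑ i, (a i : ℤ) * w i) + (c : ℤ) * q := by
    rw [hb, hu, Finset.sum_mul]
    congr 1
    exact Finset.sum_congr rfl fun i _ => by rw [hw]; ring
  set K : ℕ := (∑ i, (w i).natAbs) + q.natAbs with hK
  have hwabs : ∀ i, (w i).natAbs ≤ K := by
    intro i
    rw [hK]
    exact le_add_of_le_of_nonneg (Finset.single_le_sum
      (f := fun i => (w i).natAbs) (fun _ _ => Nat.zero_le _)
      (Finset.mem_univ i)) (Nat.zero_le _)
  have hwK : ∀ i, 0 ≤ (K : ℤ) + w i := by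
    intro i
    have h1 := hwabs i
    omega
  have hqK : 0 ≤ (K : ℤ) + q := by
    have : q.natAbs ≤ K := by rw [hK]; omega
    omega
  have hK1 : 1 ≤ K := by
    rcases Nat.eq_zero_or_pos K with h0 | h
    · exfalso
      have hq0 : q = 0 := by omega
      have hw0 : ∀ i, w i = 0 := by
        intro i; have := hwabs i; omega
      rw [hq0] at hkey
      simp only [hw0, mul_zero, Finset.sum_const_zero, add_zero] at hkey
      exact one_ne_zero hkey
    · exact h
  set t : ℕ := (∑ i, a i * K) + c * K with ht_def
  have ht : NRep a c t := ⟨fun _ => K, K, rfl⟩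
  have ht1 : NRep a c (t + 1) := by
    refine ⟨fun i => ((K : ℤ) + w i).toNat, ((K : ℤ) + q).toNat, ?_⟩
    have hgz : ((t + 1 : ℕ) : ℤ)
        = ((∑ i, a i * ((K : ℤ) + w i).toNat + c * ((K : ℤ) + q).toNat : ℕ) : ℤ) := by
      have hsum1 : ∑ i, (a i : ℤ) * (((K : ℤ) + w i).toNat : ℤ)
          = ∑ i, (a i : ℤ) * ((K : ℤ) + w i) :=
        Finset.sum_congr rfl fun i _ => by rw [Int.toNat_of_nonneg (hwK i)]
      push_cast
      rw [hsum1, Int.toNat_of_nonneg hqK]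
      have expand : ∑ i, (a i : ℤ) * ((K : ℤ) + w i)
          = (∑ i, (a i : ℤ) * (K : ℤ)) + ∑ i, (a i : ℤ) * w i := by
        rw [← Finset.sum_add_distrib]
        exact Finset.sum_congr rfl fun i _ => by ring
      rw [expand]
      have : ((t : ℕ) : ℤ) = (∑ i, (a i : ℤ) * (K : ℤ)) + (c : ℤ) * (K : ℤ) := by
        rw [ht_def]; push_cast; ring
      rw [this]
      linarith [hkey]
    exact Nat.cast_injective hgz
  have htpos : 1 ≤ t := by
    have : c * K ≥ 1 := Nat.one_le_iff_ne_zero.mpr (Nat.mul_ne_zero (by omega) (by omega))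
    omega
  refine ⟨t * t, fun m hm => ?_⟩
  have hmod := Nat.div_add_mod m t
  set qq := m / t with hqq
  set r := m % t with hr
  have hrt : r < t := Nat.mod_lt _ (by omega)
  have hqqt : t ≤ qq := by
    rw [hqq]
    exact Nat.le_div_iff_mul_le (by omega) |>.mpr (by nlinarith)
  obtain ⟨s, hs⟩ : ∃ s, qq = r + s := ⟨qq - r, by omega⟩
  have hmeq : m = s * t + r * (t + 1) := by
    rw [← hmod, hs]; ring
  rw [hmeq]
  exact nrep_add (nrep_mul s ht) (nrep_mul r ht1)
/-- Brauer–Shockley-type recursion for the genus: if d divides each of a₁,…,a_{n-1}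
and gcd(d, c) = 1, then g(a₁,…,a_{n-1},c) = d·g(a₁/d,…,a_{n-1}/d,c) + (c-1)(d-1)/2. -/
theorem stmt_11 (n : ℕ) (a : Fin n → ℕ) (c d : ℕ)
    (hapos : ∀ i, 0 < a i) (hc : 0 < c) (hd : 0 < d)
    (hdvd : ∀ i, d ∣ a i) (hdc : Nat.Coprime d c)
    (hgcd : Nat.gcd (Finset.univ.gcd a) c = 1) :
    {m : ℕ | ¬∃ x : Fin n → ℕ, ∃ y : ℕ, m = (∑ i, a i * x i) + c * y}.ncard =
      d * {m : ℕ | ¬∃ x : Fin n → ℕ, ∃ y : ℕ,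
        m = (∑ i, (a i / d) * x i) + c * y}.ncard + (c - 1) * (d - 1) / 2 := by
  classical
  rcases eq_or_lt_of_le (Nat.succ_le_of_lt hd : 1 ≤ d) with hd1 | hd2
  · -- d = 1
    subst hd1
    simp [Nat.div_one]
  -- now 1 < d
  set a' : Fin n → ℕ := fun i => a i / d with ha'
  have hSdef : {m : ℕ | ¬∃ x : Fin n → ℕ, ∃ y : ℕ, m = (∑ i, a i * x i) + c * y}
      = {m : ℕ | ¬ NRep a c m} := rfl
  have hTdef : {m : ℕ | ¬∃ x : Fin n → ℕ, ∃ y : ℕ, m = (∑ i, (a i / d) * x i) + c * y}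
      = {m : ℕ | ¬ NRep a' c m} := rfl
  rw [hSdef, hTdef]
  obtain ⟨e, -, he⟩ := Nat.exists_mul_mod_eq_one_of_coprime hdc.symm hd2
  -- gcd condition for a'
  have hmul : ∀ i, a i = d * a' i := fun i => (Nat.mul_div_cancel' (hdvd i)).symm
  have hgcd' : Nat.gcd (Finset.univ.gcd a') c = 1 := by
    apply Nat.dvd_one.mp
    rw [← hgcd]
    refine Nat.dvd_gcd (dvd_trans (dvd_trans (Nat.gcd_dvd_left _ _) ?_) dvd_rfl)
      (Nat.gcd_dvd_right _ _)
    have : Finset.univ.gcd a = Finset.univ.gcd (fun i => d * a' i) := by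
      apply Finset.gcd_congr rfl
      intro i _
      exact hmul i
    rw [this, Finset.gcd_mul_left]
    simp only [normalize_eq]
    exact Dvd.intro_left d rfl
  -- finiteness
  have hfinS : {m : ℕ | ¬ NRep a c m}.Finite := by
    obtain ⟨N, hN⟩ := nrep_cofinite a c hc hgcd
    refine Set.Finite.subset (Set.finite_Iio N) fun m hm => ?_
    simp only [Set.mem_setOf_eq] at hm
    by_contra h
    exact hm (hN m (by simpa using h))
  have hfinT : {m : ℕ | ¬ NRep a' c m}.Finite := by
    obtain ⟨N, hN⟩ := nrep_cofinite a' c hc hgcd'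
    refine Set.Finite.subset (Set.finite_Iio N) fun m hm => ?_
    simp only [Set.mem_setOf_eq] at hm
    by_contra h
    exact hm (hN m (by simpa using h))
  -- modular arithmetic helpers
  have hd0 : 0 < d := hd
  have hrho : ∀ m, (c * (e * m % d)) % d = m % d := by
    intro m
    calc (c * (e * m % d)) % d = (c % d) * (e * m % d % d) % d := by rw [Nat.mul_mod]
      _ = (c % d) * (e * m % d) % d := by rw [Nat.mod_mod_of_dvd _ dvd_rfl]
      _ = (c * (e * m)) % d := by rw [← Nat.mul_mod]
      _ = ((c * e) % d) * (m % d) % d := by rw [← mul_assoc, Nat.mul_mod]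
      _ = m % d % d := by rw [he, one_mul]
      _ = m % d := Nat.mod_mod_of_dvd _ dvd_rfl
  have hcancel : ∀ y r, r < d → (c * y) % d = (c * r) % d → y % d = r := by
    intro y r hr h
    have : y ≡ r [MOD d] := Nat.ModEq.cancel_left_of_coprime hdc h
    rw [Nat.ModEq] at this
    rw [this, Nat.mod_eq_of_lt hr]
  have hsum : ∀ x : Fin n → ℕ, ∑ i, a i * x i = d * ∑ i, a' i * x i := by
    intro x
    rw [Finset.mul_sum]
    exact Finset.sum_congr rfl fun i _ => by rw [hmul i, mul_assoc]
  have hymod : ∀ (x : Fin n → ℕ) (y : ℕ), ((∑ i, a i * x i) + c * y) % d = (c * y) % d := by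
    intro x y
    rw [hsum x, Nat.mul_add_mod]
  -- key transfer lemma
  have hL1 : ∀ r, r < d → ∀ k, (NRep a c (d * k + c * r) ↔ NRep a' c k) := by
    intro r hr k
    constructor
    · rintro ⟨x, y, hxy⟩
      have hmod1 : (d * k + c * r) % d = (c * r) % d := Nat.mul_add_mod _ _ _
      have hmod2 : (d * k + c * r) % d = (c * y) % d := by rw [hxy]; exact hymod x y
      have hy : y % d = r := hcancel y r hr (by rw [← hmod2, hmod1])
      have hy2 : y = d * (y / d) + r := by
        conv_lhs => rw [← Nat.div_add_mod y d]
        rw [hy]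
      refine ⟨x, y / d, ?_⟩
      have heq : d * k + c * r = d * ((∑ i, a' i * x i) + c * (y / d)) + c * r := by
        calc d * k + c * r = (∑ i, a i * x i) + c * y := hxy
          _ = d * (∑ i, a' i * x i) + c * (d * (y / d) + r) := by rw [hsum x, ← hy2]
          _ = d * ((∑ i, a' i * x i) + c * (y / d)) + c * r := by ring
      have heq2 : d * k = d * ((∑ i, a' i * x i) + c * (y / d)) := by omega
      exact Nat.eq_of_mul_eq_mul_left hd0 heq2
    · rintro ⟨x, y, rfl⟩
      refine ⟨x, d * y + r, ?_⟩
      rw [hsum x]; ring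
  -- low gaps
  have hL2 : ∀ r, r < d → ∀ m, m % d = (c * r) % d → m < c * r → ¬ NRep a c m := by
    rintro r hr m hm hlt ⟨x, y, rfl⟩
    have hmod2 : (c * y) % d = (c * r) % d := by rw [← hymod x y, hm]
    have hy : y % d = r := hcancel y r hr hmod2
    have h1 : r ≤ y := hy ▸ Nat.mod_le y d
    have h2 : c * r ≤ c * y := Nat.mul_le_mul_left c h1
    omega
  -- Finsets
  set FT : Finset ℕ := hfinT.toFinset with hFT
  set lowF : ℕ → Finset ℕ :=
    fun r => (Finset.range (c * r / d)).image (fun t => (c * r) % d + t * d) with hlowF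
  set imgF : ℕ → Finset ℕ := fun r => FT.image (fun k => d * k + c * r) with himgF
  set piece : ℕ → Finset ℕ := fun r => lowF r ∪ imgF r with hpiece
  have hlowmem : ∀ r m, m ∈ lowF r ↔ (m % d = (c * r) % d ∧ m < c * r) := by
    intro r m
    rw [hlowF]
    simp only [Finset.mem_image, Finset.mem_range]
    constructor
    · rintro ⟨t, ht, rfl⟩
      constructor
      · rw [Nat.add_mul_mod_self_right, Nat.mod_mod_of_dvd _ dvd_rfl]
      · have h1 := Nat.div_add_mod (c * r) d
        have h2 : t * d < (c * r / d) * d := by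
          exact Nat.mul_lt_mul_of_lt_of_le ht le_rfl hd0
        have h3 : (c * r / d) * d = d * (c * r / d) := mul_comm _ _
        omega
    · rintro ⟨h1, h2⟩
      refine ⟨m / d, ?_, ?_⟩
      · have e1 := Nat.div_add_mod m d
        have e2 := Nat.div_add_mod (c * r) d
        have h3 : d * (m / d) < d * (c * r / d) := by omega
        exact Nat.lt_of_mul_lt_mul_left h3
      · have e1 := Nat.div_add_mod m d
        rw [h1] at e1
        rw [Nat.mul_comm (m / d) d]
        omega
  have hres : ∀ r m, m ∈ piece r → m % d = (c * r) % d := by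
    intro r m hm
    rw [hpiece] at hm
    rcases Finset.mem_union.mp hm with h | h
    · exact ((hlowmem r m).mp h).1
    · rw [himgF] at h
      obtain ⟨k, _, rfl⟩ := Finset.mem_image.mp h
      exact Nat.mul_add_mod _ _ _
  -- main decomposition
  have hmain : hfinS.toFinset = (Finset.range d).biUnion piece := by
    ext m
    simp only [Set.Finite.mem_toFinset, Set.mem_setOf_eq, Finset.mem_biUnion, Finset.mem_range]
    constructor
    · intro hm
      set r := e * m % d with hrdef
      have hr : r < d := Nat.mod_lt _ (by omega)
      have hmr : (c * r) % d = m % d := hrho m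
      refine ⟨r, hr, ?_⟩
      rcases lt_or_ge m (c * r) with hlt | hge
      · exact Finset.mem_union_left _ ((hlowmem r m).mpr ⟨hmr.symm, hlt⟩)
      · have hdvd2 : d ∣ m - c * r := (Nat.modEq_iff_dvd' hge).mp hmr
        obtain ⟨k, hk⟩ := hdvd2
        have hm_eq : m = d * k + c * r := by omega
        have hkgap : ¬ NRep a' c k := fun h => hm (hm_eq ▸ (hL1 r hr k).mpr h)
        refine Finset.mem_union_right _ ?_
        rw [himgF]
        exact Finset.mem_image.mpr ⟨k, hfinT.mem_toFinset.mpr hkgap, hm_eq.symm⟩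
    · rintro ⟨r, hr, hm⟩
      rcases Finset.mem_union.mp hm with hlow | himg
      · obtain ⟨h1, h2⟩ := (hlowmem r m).mp hlow
        exact hL2 r hr m h1 h2
      · rw [himgF] at himg
        obtain ⟨k, hk, rfl⟩ := Finset.mem_image.mp himg
        have hk' : ¬ NRep a' c k := hfinT.mem_toFinset.mp hk
        exact fun h => hk' ((hL1 r hr k).mp h)
  -- disjointness across residues
  have hdisj : ∀ r ∈ Finset.range d, ∀ r' ∈ Finset.range d, r ≠ r' →
      Disjoint (piece r) (piece r') := by
    intro r hr r' hr' hne
    rw [Finset.disjoint_left]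
    intro m h1 h2
    apply hne
    have hres1 := hres r m h1
    have hres2 := hres r' m h2
    have : r % d = r' := hcancel r r' (Finset.mem_range.mp hr') (by rw [← hres1, hres2])
    rwa [Nat.mod_eq_of_lt (Finset.mem_range.mp hr)] at this
  -- cardinality of pieces
  have hcard_piece : ∀ r, (piece r).card = c * r / d + FT.card := by
    intro r
    rw [hpiece]
    rw [Finset.card_union_of_disjoint ?hdis]
    case hdis =>
      rw [Finset.disjoint_left]
      intro m hm1 hm2
      have h1 : m < c * r := ((hlowmem r m).mp hm1).2
      rw [himgF] at hm2
      obtain ⟨k, _, rfl⟩ := Finset.mem_image.mp hm2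
      omega
    congr 1
    · rw [hlowF]
      rw [Finset.card_image_of_injective _ (fun t t' h => by
        have : t * d = t' * d := by omega
        exact Nat.eq_of_mul_eq_mul_right hd0 this)]
      exact Finset.card_range _
    · rw [himgF]
      exact Finset.card_image_of_injective _ (fun k k' h => by
        have : d * k = d * k' := by omega
        exact Nat.eq_of_mul_eq_mul_left hd0 this)
  -- Gauss-type sum
  have hmodsum : ∑ r ∈ Finset.range d, (c * r) % d = ∑ r ∈ Finset.range d, r := by
    refine Finset.sum_nbij' (fun r => c * r % d) (fun r => e * r % d) ?_ ?_ ?_ ?_ ?_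
    · intro r _; exact Finset.mem_range.mpr (Nat.mod_lt _ (by omega))
    · intro r _; exact Finset.mem_range.mpr (Nat.mod_lt _ (by omega))
    · intro r hr
      calc e * (c * r % d) % d = (e % d) * (c * r % d % d) % d := by rw [Nat.mul_mod]
        _ = (e % d) * (c * r % d) % d := by rw [Nat.mod_mod_of_dvd _ dvd_rfl]
        _ = (e * (c * r)) % d := by rw [← Nat.mul_mod]
        _ = ((c * e) % d) * (r % d) % d := by
            rw [show e * (c * r) = (c * e) * r by ring, Nat.mul_mod]
        _ = r % d % d := by rw [he, one_mul]
        _ = r := by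
            rw [Nat.mod_mod_of_dvd _ dvd_rfl]
            exact Nat.mod_eq_of_lt (Finset.mem_range.mp hr)
    · intro r hr
      have := hrho r
      rwa [Nat.mod_eq_of_lt (Finset.mem_range.mp hr)] at this
    · intro r _; rfl
  have hS2 : (∑ r ∈ Finset.range d, r) * 2 = d * (d - 1) := Finset.sum_range_id_mul_two d
  have hlowsum : ∑ r ∈ Finset.range d, c * r / d = (c - 1) * (d - 1) / 2 := by
    set Sig : ℕ := ∑ r ∈ Finset.range d, c * r / d with hSig
    have heq : d * Sig + ∑ r ∈ Finset.range d, (c * r) % d = c * ∑ r ∈ Finset.range d, r := by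
      rw [hSig, Finset.mul_sum, Finset.mul_sum, ← Finset.sum_add_distrib]
      exact Finset.sum_congr rfl fun r _ => Nat.div_add_mod (c * r) d
    rw [hmodsum] at heq
    set S : ℕ := ∑ r ∈ Finset.range d, r with hS
    -- 2 * (d * Sig) + 2 * S = 2 * c * S, and 2 * S = d * (d-1)
    have h2 : d * (2 * Sig + (d - 1)) = d * (c * (d - 1)) := by
      have e1 : (d * Sig + S) * 2 = (c * S) * 2 := by rw [heq]
      calc d * (2 * Sig + (d - 1)) = (d * Sig) * 2 + d * (d - 1) := by ring
        _ = (d * Sig) * 2 + S * 2 := by rw [hS2]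
        _ = (c * S) * 2 := by omega
        _ = c * (S * 2) := by ring
        _ = c * (d * (d - 1)) := by rw [hS2]
        _ = d * (c * (d - 1)) := by ring
    have h3 : 2 * Sig + (d - 1) = c * (d - 1) := Nat.eq_of_mul_eq_mul_left hd0 h2
    have h4 : (c - 1) * (d - 1) = c * (d - 1) - (d - 1) := Nat.sub_one_mul c (d - 1)
    omega
  -- assemble
  rw [Set.ncard_eq_toFinset_card _ hfinS, Set.ncard_eq_toFinset_card _ hfinT]
  rw [hmain, Finset.card_biUnion hdisj]
  rw [Finset.sum_congr rfl fun r _ => hcard_piece r]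
  rw [Finset.sum_add_distrib, Finset.sum_const, Finset.card_range, hlowsum]
  rw [smul_eq_mul]
  ring
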